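/- Let u, v : Fin m → ℂ be linearly independent over ℂ, and suppose there exist pairs (p₁, p₂) and (q₁, q₂) in ℂ × ℂ such that for every index i, the pair (u i, v i) is a scalar multiple of (p₁, p₂) or a scalar multiple of (q₁, q₂). Then there exists a ℂ-subspace W of Fin m → ℂ of dimension 2 such that (fun x i => (x i)^2) '' {a • u + b • v | a b : ℂ} = W (equality of subsets of Fin m → ℂ). (If the point configuration of a line in ℙ^n consists of exactly two points, the coordinate-wise square of the line is again a line.) -/

import Mathlib

/-- If the point configuration of the line spanned by `u` and `v` consists of exactly
two points (every coordinate pair `(u i, v i)` is proportional to `p` or to `q`), then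
the coordinate-wise square of the line is again a line: the image of its affine cone
under coordinate-wise squaring is a `2`-dimensional linear subspace. -/
theorem square_of_line_two_points (m : ℕ) (u v : Fin m → ℂ)
    (huv : LinearIndependent ℂ ![u, v]) (p q : ℂ × ℂ)
    (h : ∀ i, (∃ c : ℂ, (u i, v i) = c • p) ∨ (∃ c : ℂ, (u i, v i) = c • q)) :
    ∃ W : Submodule ℂ (Fin m → ℂ), Module.finrank ℂ W = 2 ∧
      (fun x : Fin m → ℂ => fun i => (x i) ^ 2) ''
          {x : Fin m → ℂ | ∃ a b : ℂ, x = a • u + b • v}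
        = (W : Set (Fin m → ℂ)) := by
  classical
  rw [LinearIndependent.pair_iff] at huv
  -- no single vector w can carry all coordinate pairs
  have nocol : ∀ w : ℂ × ℂ, (∀ i, ∃ c : ℂ, (u i, v i) = c • w) → False := by
    intro w hw
    have hz : w.2 • u + (-w.1) • v = 0 := by
      funext i
      obtain ⟨c, hc⟩ := hw i
      have h1 : u i = c * w.1 := congrArg Prod.fst hc
      have h2 : v i = c * w.2 := congrArg Prod.snd hc
      simp only [Pi.add_apply, Pi.smul_apply, smul_eq_mul, Pi.zero_apply, h1, h2]
      ring
    obtain ⟨h1, h2⟩ := huv _ _ hz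
    have hw0 : w = 0 := by
      have : w.1 = 0 := by simpa using h2
      exact Prod.ext this h1
    have hu : u = 0 := by
      funext i
      obtain ⟨c, hc⟩ := hw i
      rw [hw0, smul_zero] at hc
      exact (Prod.mk.injEq _ _ _ _ ▸ hc).1
    have := (huv 1 0 (by simp [hu])).1
    exact one_ne_zero this
  -- the determinant of p, q is nonzero
  have hdet : p.1 * q.2 - p.2 * q.1 ≠ 0 := by
    intro hd
    by_cases hp0 : p = 0
    · apply nocol q
      intro i
      rcases h i with ⟨c, hc⟩ | ⟨c, hc⟩
      · exact ⟨0, by simp [hc, hp0]⟩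
      · exact ⟨c, hc⟩
    · apply nocol p
      intro i
      rcases h i with ⟨c, hc⟩ | ⟨c, hc⟩
      · exact ⟨c, hc⟩
      · have hp : p.1 ≠ 0 ∨ p.2 ≠ 0 := by
          by_contra hcon
          push_neg at hcon
          exact hp0 (Prod.ext hcon.1 hcon.2)
        rcases hp with h1 | h2
        · refine ⟨c * (q.1 / p.1), ?_⟩
          rw [hc]
          refine Prod.ext ?_ ?_
          · simp only [Prod.smul_fst, smul_eq_mul]
            field_simp
          · simp only [Prod.smul_snd, smul_eq_mul]
            field_simp
            linear_combination c * hd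
        · refine ⟨c * (q.2 / p.2), ?_⟩
          rw [hc]
          refine Prod.ext ?_ ?_
          · simp only [Prod.smul_fst, smul_eq_mul]
            field_simp
            linear_combination (-c) * hd
          · simp only [Prod.smul_snd, smul_eq_mul]
            field_simp
  -- the two squared coordinate vectors
  set e : Fin m → ℂ := fun i =>
    if hP : ∃ c : ℂ, (u i, v i) = c • p then hP.choose ^ 2 else 0 with he
  set f : Fin m → ℂ := fun i =>
    if hP : ∃ c : ℂ, (u i, v i) = c • p then 0
    else ((h i).resolve_left hP).choose ^ 2 with hf
  -- key coordinatewise identity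
  have key : ∀ (a b : ℂ) (i : Fin m),
      (a * u i + b * v i) ^ 2
        = (a * p.1 + b * p.2) ^ 2 * e i + (a * q.1 + b * q.2) ^ 2 * f i := by
    intro a b i
    by_cases hP : ∃ c : ℂ, (u i, v i) = c • p
    · have hc := hP.choose_spec
      have h1 : u i = hP.choose * p.1 := congrArg Prod.fst hc
      have h2 : v i = hP.choose * p.2 := congrArg Prod.snd hc
      have hei : e i = hP.choose ^ 2 := by simp only [he]; rw [dif_pos hP]
      have hfi : f i = 0 := by simp only [hf]; rw [dif_pos hP]
      rw [hei, hfi]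
      linear_combination (a * u i + b * v i + hP.choose * (a * p.1 + b * p.2)) * a * h1
        + (a * u i + b * v i + hP.choose * (a * p.1 + b * p.2)) * b * h2
    · have hc := ((h i).resolve_left hP).choose_spec
      have h1 : u i = ((h i).resolve_left hP).choose * q.1 := congrArg Prod.fst hc
      have h2 : v i = ((h i).resolve_left hP).choose * q.2 := congrArg Prod.snd hc
      have hei : e i = 0 := by simp only [he]; rw [dif_neg hP]
      have hfi : f i = ((h i).resolve_left hP).choose ^ 2 := by
        simp only [hf]; rw [dif_neg hP]
      rw [hei, hfi]
      linear_combination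
        (a * u i + b * v i + ((h i).resolve_left hP).choose * (a * q.1 + b * q.2)) * a * h1
        + (a * u i + b * v i + ((h i).resolve_left hP).choose * (a * q.1 + b * q.2)) * b * h2
  -- disjoint supports
  have hef : ∀ i, e i * f i = 0 := by
    intro i
    by_cases hP : ∃ c : ℂ, (u i, v i) = c • p
    · have hz : f i = 0 := by simp only [hf]; rw [dif_pos hP]
      rw [hz, mul_zero]
    · have hz : e i = 0 := by simp only [he]; rw [dif_neg hP]
      rw [hz, zero_mul]
  -- e ≠ 0 and f ≠ 0
  have hE0 : e ≠ 0 := by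
    intro hE
    apply nocol q
    intro i
    by_cases hP : ∃ c : ℂ, (u i, v i) = c • p
    · have : e i = 0 := by rw [hE]; rfl
      rw [he] at this
      simp only [dif_pos hP] at this
      have hc0 : hP.choose = 0 := by
        have := sq_eq_zero_iff.mp this
        exact this
      have := hP.choose_spec
      rw [hc0, zero_smul] at this
      exact ⟨0, by rw [this, zero_smul]⟩
    · exact (h i).resolve_left hP
  have hF0 : f ≠ 0 := by
    intro hF
    apply nocol p
    intro i
    by_cases hP : ∃ c : ℂ, (u i, v i) = c • p
    · exact hP
    · have : f i = 0 := by rw [hF]; rfl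
      rw [hf] at this
      simp only [dif_neg hP] at this
      have hc0 : ((h i).resolve_left hP).choose = 0 := sq_eq_zero_iff.mp this
      have hspec := ((h i).resolve_left hP).choose_spec
      rw [hc0, zero_smul] at hspec
      exact ⟨0, by rw [hspec, zero_smul]⟩
  -- linear independence of e, f
  have hind : LinearIndependent ℂ ![e, f] := by
    rw [LinearIndependent.pair_iff]
    intro s t hst
    have hco : ∀ i, s * e i + t * f i = 0 := by
      intro i
      have := congrFun hst i
      simpa using this
    have hs : s = 0 := by
      by_contra hs
      apply hE0
      funext i
      have h1 := hco i
      have h2 := hef i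
      have : s * (e i * e i) = 0 := by linear_combination e i * h1 - t * h2
      have := (mul_eq_zero.mp this).resolve_left hs
      simpa using mul_self_eq_zero.mp this
    have ht : t = 0 := by
      by_contra ht
      apply hF0
      funext i
      have h1 := hco i
      have h2 := hef i
      have : t * (f i * f i) = 0 := by linear_combination f i * h1 - s * h2
      have := (mul_eq_zero.mp this).resolve_left ht
      simpa using mul_self_eq_zero.mp this
    exact ⟨hs, ht⟩
  -- solving for (s, t)
  have solve : ∀ s t : ℂ, ∃ a b : ℂ,
      (a * p.1 + b * p.2) ^ 2 = s ∧ (a * q.1 + b * q.2) ^ 2 = t := by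
    intro s t
    obtain ⟨σ, hσ⟩ : ∃ z : ℂ, z ^ 2 = s := IsAlgClosed.exists_pow_nat_eq s zero_lt_two
    obtain ⟨τ, hτ⟩ : ∃ z : ℂ, z ^ 2 = t := IsAlgClosed.exists_pow_nat_eq t zero_lt_two
    refine ⟨(σ * q.2 - τ * p.2) / (p.1 * q.2 - p.2 * q.1),
      (τ * p.1 - σ * q.1) / (p.1 * q.2 - p.2 * q.1), ?_, ?_⟩
    · rw [← hσ]; congr 1; rw [div_mul_eq_mul_div, div_mul_eq_mul_div, ← add_div, div_eq_iff hdet]; ring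
    · rw [← hτ]; congr 1; rw [div_mul_eq_mul_div, div_mul_eq_mul_div, ← add_div, div_eq_iff hdet]; ring
  refine ⟨Submodule.span ℂ {e, f}, ?_, ?_⟩
  · have hr : ({e, f} : Set (Fin m → ℂ)) = Set.range ![e, f] := by
      ext x
      simp [Matrix.range_cons, Matrix.range_empty]
      tauto
    rw [hr, finrank_span_eq_card hind]
    simp
  · ext x
    simp only [Set.mem_image, Set.mem_setOf_eq, SetLike.mem_coe]
    constructor
    · rintro ⟨y, ⟨a, b, rfl⟩, rfl⟩
      rw [Submodule.mem_span_pair]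
      refine ⟨(a * p.1 + b * p.2) ^ 2, (a * q.1 + b * q.2) ^ 2, ?_⟩
      funext i
      simp only [Pi.add_apply, Pi.smul_apply, smul_eq_mul]
      exact (key a b i).symm
    · intro hx
      obtain ⟨s, t, hst⟩ := Submodule.mem_span_pair.mp hx
      obtain ⟨a, b, ha, hb⟩ := solve s t
      refine ⟨a • u + b • v, ⟨a, b, rfl⟩, ?_⟩
      funext i
      have := congrFun hst i
      simp only [Pi.add_apply, Pi.smul_apply, smul_eq_mul] at this ⊢
      rw [key a b i, ha, hb]
      exact this
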